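/- Let F be a field of characteristic 0 with a valuation v such that p ∈ m_v (residue characteristic p) and 1 + m_v ⊆ (F^×)^p. If additionally 1 + m_v = (1 + m_v)^p, then every a ∈ m_v \ p·m_v is a p-th power in F^×: indeed, writing 1 + a = (1+b)^p with b ∈ m_v gives 1 + a ∈ 1 + b^p + p·m_v, and the ultrametric inequality yields a ∈ b^p·(1 + m_v) ⊆ (F^×)^p. -/

import Mathlib

private lemma vnat_le_one {F : Type*} [Field F] {Γ : Type*}
    [LinearOrderedCommGroupWithZero Γ] (v : Valuation F Γ) (n : ℕ) : v n ≤ 1 := by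
  induction n with
  | zero => simp
  | succ n ih =>
    push_cast
    exact v.map_add_le ih (le_of_eq v.map_one)

/-- Let `F` be a field of characteristic `0` with a valuation `v` of
residue characteristic `p` (i.e. `v p < 1`) such that `1 + m_v ⊆ (F^×)^p` and
`1 + m_v = (1 + m_v)^p`.  Then every `a ∈ m_v \ p·m_v` is a `p`-th power in `F`. -/
theorem statement18 (p : ℕ) (hp : p.Prime) (F : Type*) [Field F] [CharZero F]
    (Γ : Type*) [LinearOrderedCommGroupWithZero Γ] (v : Valuation F Γ)
    (hres : v p < 1)
    (h1 : ∀ x : F, v x < 1 → ∃ y : F, 1 + x = y ^ p)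
    (h2 : ∀ x : F, v x < 1 → ∃ b : F, v b < 1 ∧ 1 + x = (1 + b) ^ p) :
    ∀ a : F, v a < 1 → (¬ ∃ c : F, v c < 1 ∧ a = p * c) → ∃ y : F, a = y ^ p := by
  intro a ha hna
  have hpF : (p : F) ≠ 0 := Nat.cast_ne_zero.mpr hp.ne_zero
  have hvp : 0 < v p := by
    simpa [Valuation.pos_iff] using hpF
  -- From the non-divisibility hypothesis: v p ≤ v a
  have hpa : v p ≤ v a := by
    by_contra hlt
    push_neg at hlt
    refine hna ⟨a / p, ?_, by field_simp⟩
    rw [map_div₀]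
    rw [div_lt_iff₀ hvp, one_mul]; exact hlt
  have ha0 : a ≠ 0 := by
    intro h
    rw [h, v.map_zero] at hpa
    exact absurd hpa (not_le.mpr hvp)
  -- Get b with 1 + a = (1+b)^p
  obtain ⟨b, hb, hab⟩ := h2 a ha
  -- Binomial expansion
  have hexp := add_pow_prime_eq hp (1 : F) b
  set d : F := ∑ k ∈ Finset.Ioo 0 p, (1:F) ^ k * b ^ (p - k) * ↑(p.choose k / p) with hd
  have key : a = b ^ p + p * d := by
    have : 1 + a = 1 + b ^ p + p * d := by
      rw [hab, hexp]; simp [hd]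
      rw [mul_assoc]; congr 1; rw [Finset.mul_sum]
      refine Finset.sum_congr rfl fun k hk => ?_
      rw [Finset.mem_Ioo] at hk
      obtain ⟨m, hm⟩ : ∃ m, p - k = m + 1 := ⟨p - k - 1, by omega⟩
      rw [hm, Nat.add_sub_cancel]; ring
    linear_combination this
  -- v d < 1
  have hvd : v d < 1 := by
    rcases eq_or_ne d 0 with h | h
    · simp [h]
    refine v.map_sum_lt one_ne_zero fun k hk => ?_
    rw [Finset.mem_Ioo] at hk
    have h1k : v ((1:F) ^ k * b ^ (p - k) * ↑(p.choose k / p)) =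
        v (b ^ (p - k)) * v ((p.choose k / p : ℕ) : F) := by
      simp [v.map_mul, v.map_pow]
    rw [h1k]
    have hbk : v (b ^ (p - k)) < 1 := by
      rw [v.map_pow]
      exact pow_lt_one₀ (zero_le') hb (by omega)
    calc v (b ^ (p - k)) * v ((p.choose k / p : ℕ) : F)
        ≤ v (b ^ (p - k)) * 1 := mul_le_mul_right (vnat_le_one v _) _
      _ < 1 := by simpa using hbk -- 
  -- v (p * d) < v a
  have hvpd : v ((p : F) * d) < v a := by
    rw [v.map_mul]
    calc v (p : F) * v d < v (p : F) := mul_lt_of_lt_one_right hvp hvd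
      _ ≤ v a := hpa
  -- hence v (b^p) = v a
  have hvb : v (b ^ p) = v a := by
    have : b ^ p = a - p * d := by rw [key]; ring
    rw [this, v.map_sub_eq_of_lt_left hvpd]
  have hbp0 : (b : F) ^ p ≠ 0 := by
    intro h
    rw [h, v.map_zero] at hvb
    exact ha0 (by simpa [Valuation.zero_iff] using hvb.symm)
  -- a / b^p = 1 + (p*d)/b^p with the latter term small
  set t : F := (p : F) * d / b ^ p with ht
  have hvt : v t < 1 := by
    rw [ht, map_div₀, hvb]
    rw [div_lt_iff₀ (hvp.trans_le hpa), one_mul]; exact hvpd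
  obtain ⟨y, hy⟩ := h1 t hvt
  refine ⟨b * y, ?_⟩
  have : a / b ^ p = 1 + t := by
    rw [ht, key]; field_simp
  rw [mul_pow, ← hy, ← this]
  field_simp
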